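/- For an integer m ≥ 3 and each k ∈ {1, …, m}, let C_k be the circle in ℝ² with center (−4^k, 0) and radius 4^k + 4^{−k}. Then: (a) every two of the circles C_1, …, C_m intersect in exactly two points; (b) no point of the plane lies on three of the circles; and (c) for all i < j < k, both intersection points of C_i and C_j lie in the open disk of C_k, both intersection points of C_j and C_k lie in the open disk of C_i, and both intersection points of C_i and C_k lie strictly outside the closed disk of C_j. In particular every triple of these circles is NonKrupp. -/

import Mathlib

noncomputable section

/-- The Euclidean plane. -/
abbrev E2 := EuclideanSpace ℝ (Fin 2)

/-- The point `(x, y)` of the plane. -/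
def pt (x y : ℝ) : E2 := !₂[x, y]

/-- The circle with center `c` and radius `r` separates the points `p` and `q`
(not lying on it) if exactly one of them lies in its open disk. -/
def Separates (c : E2) (r : ℝ) (p q : E2) : Prop :=
  Xor' (p ∈ Metric.ball c r) (q ∈ Metric.ball c r)

/-- The circle with center `c`, radius `r` does not separate the two intersection points of
the other two circles. -/
def NonSepInt (c : E2) (r : ℝ) (c₁ : E2) (r₁ : ℝ) (c₂ : E2) (r₂ : ℝ) : Prop :=
  ∀ p q : E2, p ≠ q → Metric.sphere c₁ r₁ ∩ Metric.sphere c₂ r₂ = {p, q} →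
    ¬ Separates c r p q

/- ### Auxiliary lemmas -/

lemma dist_sq (p : E2) (u v : ℝ) :
    dist p (pt u v) ^ 2 = (p 0 - u) ^ 2 + (p 1 - v) ^ 2 := by
  rw [EuclideanSpace.dist_eq, Real.sq_sqrt (by positivity)]
  simp [Fin.sum_univ_two, pt, Real.dist_eq, sq_abs]

lemma eq_of_sq_eq {x y : ℝ} (hx : 0 ≤ x) (hy : 0 ≤ y) (h : x ^ 2 = y ^ 2) : x = y := by
  nlinarith

lemma lt_of_sq_lt {x r : ℝ} (hx : 0 ≤ x) (hr : 0 ≤ r) (h : x ^ 2 < r ^ 2) : x < r := by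
  nlinarith

lemma memS {r : ℝ} (hr : 0 ≤ r) (u : ℝ) (p : E2) :
    p ∈ Metric.sphere (pt (-u) 0) r ↔ (p 0 + u) ^ 2 + (p 1) ^ 2 = r ^ 2 := by
  rw [Metric.mem_sphere]
  constructor
  · intro h
    have hd := dist_sq p (-u) 0
    rw [h] at hd
    linear_combination -hd
  · intro h
    have hd := dist_sq p (-u) 0
    have h2 : dist p (pt (-u) 0) ^ 2 = r ^ 2 := by rw [hd]; linear_combination h
    exact eq_of_sq_eq dist_nonneg hr h2

lemma solveX {a b A B x y : ℝ} (hab : a ≠ b)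
    (hA : a * A = 1) (hB : b * B = 1)
    (h1 : (x + a) ^ 2 + y ^ 2 = (a + A) ^ 2)
    (h2 : (x + b) ^ 2 + y ^ 2 = (b + B) ^ 2) :
    x * (2 * a ^ 2 * b ^ 2) = -(a + b) := by
  have key : (a - b) * (x * (2 * a ^ 2 * b ^ 2)) = (a - b) * (-(a + b)) := by
    linear_combination a^2*b^2*h1 - a^2*b^2*h2 + (2*a^2*b^2 + b^2*(a*A+1))*hA
      - (2*a^2*b^2 + a^2*(b*B+1))*hB
  exact mul_left_cancel₀ (sub_ne_zero.mpr hab) key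

lemma otherCircle {a b A B X : ℝ} (ha : 0 < a) (hb : 0 < b)
    (hA : a * A = 1) (hB : b * B = 1)
    (hX : X * (2 * a ^ 2 * b ^ 2) = -(a + b)) :
    (X + b) ^ 2 - (X + a) ^ 2 = (b + B) ^ 2 - (a + A) ^ 2 := by
  have key : ((X + b) ^ 2 - (X + a) ^ 2) * (a ^ 2 * b ^ 2)
      = ((b + B) ^ 2 - (a + A) ^ 2) * (a ^ 2 * b ^ 2) := by
    linear_combination (b - a) * hX + (2*a^2*b^2 + b^2*(a*A+1)) * hA
      - (2*a^2*b^2 + a^2*(b*B+1)) * hB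
  exact mul_right_cancel₀ (by positivity) key

lemma insideBig {a b c A C x y : ℝ} (ha : 0 < a) (hab : a < b) (hbc : b < c)
    (hA : a * A = 1) (hC : c * C = 1)
    (hx : x * (2 * a ^ 2 * b ^ 2) = -(a + b))
    (h1 : (x + a) ^ 2 + y ^ 2 = (a + A) ^ 2) :
    (x + c) ^ 2 + y ^ 2 < (c + C) ^ 2 := by
  have hb : 0 < b := ha.trans hab
  have hc : 0 < c := hb.trans hbc
  have hM : 0 < a ^ 2 * b ^ 2 * c ^ 2 := by positivity
  have e1 : 2*(c-a)*x*(a^2*b^2*c^2) = -(a+b)*((c-a)*c^2) := by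
    linear_combination ((c-a)*c^2) * hx
  have e2 : A^2*(a^2*b^2*c^2) = b^2*c^2 := by linear_combination (b^2*c^2*(a*A+1)) * hA
  have e3 : C^2*(a^2*b^2*c^2) = a^2*b^2 := by linear_combination (a^2*b^2*(c*C+1)) * hC
  have hsum : 0 < (c-a)*(c-b)*(a*b+a*c+b*c) := by
    have := hab.trans hbc
    apply mul_pos (mul_pos (by linarith) (by linarith)); nlinarith
  have key : (2*(c-a)*x + (A^2 - C^2)) * (a^2*b^2*c^2) < 0 := by nlinarith [e1, e2, e3, hsum]
  have key2 : 2*(c-a)*x + (A^2 - C^2) < 0 := by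
    by_contra h
    push_neg at h
    nlinarith [mul_nonneg h hM.le]
  nlinarith [h1, hA, hC, key2]

lemma insideSmall {a b c A B x y : ℝ} (ha : 0 < a) (hab : a < b) (hbc : b < c)
    (hA : a * A = 1) (hB : b * B = 1)
    (hx : x * (2 * b ^ 2 * c ^ 2) = -(b + c))
    (h2 : (x + b) ^ 2 + y ^ 2 = (b + B) ^ 2) :
    (x + a) ^ 2 + y ^ 2 < (a + A) ^ 2 := by
  have hb : 0 < b := ha.trans hab
  have hc : 0 < c := hb.trans hbc
  have hM : 0 < a ^ 2 * b ^ 2 * c ^ 2 := by positivity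
  have e1 : 2*(a-b)*x*(a^2*b^2*c^2) = -(b+c)*((a-b)*a^2) := by
    linear_combination ((a-b)*a^2) * hx
  have e2 : B^2*(a^2*b^2*c^2) = a^2*c^2 := by linear_combination (a^2*c^2*(b*B+1)) * hB
  have e3 : A^2*(a^2*b^2*c^2) = b^2*c^2 := by linear_combination (b^2*c^2*(a*A+1)) * hA
  have hsum : 0 < (b-a)*(c-a)*(a*b+a*c+b*c) := by
    have := hab.trans hbc
    apply mul_pos (mul_pos (by linarith) (by linarith)); nlinarith
  have key : (2*(a-b)*x + (B^2 - A^2)) * (a^2*b^2*c^2) < 0 := by nlinarith [e1, e2, e3, hsum]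
  have key2 : 2*(a-b)*x + (B^2 - A^2) < 0 := by
    by_contra h
    push_neg at h
    nlinarith [mul_nonneg h hM.le]
  nlinarith [h2, hA, hB, key2]

lemma outsideMid {a b c A B x y : ℝ} (ha : 0 < a) (hab : a < b) (hbc : b < c)
    (hA : a * A = 1) (hB : b * B = 1)
    (hx : x * (2 * a ^ 2 * c ^ 2) = -(a + c))
    (h1 : (x + a) ^ 2 + y ^ 2 = (a + A) ^ 2) :
    (b + B) ^ 2 < (x + b) ^ 2 + y ^ 2 := by
  have hb : 0 < b := ha.trans hab
  have hc : 0 < c := hb.trans hbc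
  have hM : 0 < a ^ 2 * b ^ 2 * c ^ 2 := by positivity
  have e1 : 2*(b-a)*x*(a^2*b^2*c^2) = -(a+c)*((b-a)*b^2) := by
    linear_combination ((b-a)*b^2) * hx
  have e2 : A^2*(a^2*b^2*c^2) = b^2*c^2 := by linear_combination (b^2*c^2*(a*A+1)) * hA
  have e3 : B^2*(a^2*b^2*c^2) = a^2*c^2 := by linear_combination (a^2*c^2*(b*B+1)) * hB
  have hsum : 0 < (b-a)*(c-b)*(a*b+a*c+b*c) := by
    apply mul_pos (mul_pos (by linarith) (by linarith)); nlinarith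
  have key : 0 < (2*(b-a)*x + (A^2 - B^2)) * (a^2*b^2*c^2) := by nlinarith [e1, e2, e3, hsum]
  have key2 : 0 < 2*(b-a)*x + (A^2 - B^2) := by
    by_contra h
    push_neg at h
    nlinarith [mul_nonneg (neg_nonneg.mpr h) hM.le]
  nlinarith [h1, hA, hB, key2]

lemma inter_char {a b : ℝ} (ha1 : 1 ≤ a) (hb1 : 1 ≤ b) (hab : a ≠ b) :
    ∃ X Y : ℝ, 0 < Y ∧
      Metric.sphere (pt (-a) 0) (a + a⁻¹) ∩ Metric.sphere (pt (-b) 0) (b + b⁻¹)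
        = {pt X Y, pt X (-Y)} := by
  have ha : 0 < a := lt_of_lt_of_le one_pos ha1
  have hb : 0 < b := lt_of_lt_of_le one_pos hb1
  have hA : a * a⁻¹ = 1 := mul_inv_cancel₀ ha.ne'
  have hB : b * b⁻¹ = 1 := mul_inv_cancel₀ hb.ne'
  have hra : 0 ≤ a + a⁻¹ := by positivity
  have hrb : 0 ≤ b + b⁻¹ := by positivity
  set X : ℝ := -(a + b) / (2 * a ^ 2 * b ^ 2) with hXdef
  have hX : X * (2 * a ^ 2 * b ^ 2) = -(a + b) := by
    rw [hXdef]; field_simp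
  have hXneg : X < 0 := by
    rw [hXdef]
    apply div_neg_of_neg_of_pos (by linarith) (by positivity)
  have hTle : a + b ≤ 2 * a ^ 2 * b ^ 2 := by
    nlinarith [mul_nonneg (mul_nonneg ha.le (sq_nonneg b)) (sub_nonneg.mpr ha1),
      mul_nonneg (mul_nonneg ha.le hb.le) (sub_nonneg.mpr hb1),
      mul_nonneg ha.le (sub_nonneg.mpr hb1),
      mul_nonneg (mul_nonneg hb.le (sq_nonneg a)) (sub_nonneg.mpr hb1),
      mul_nonneg (mul_nonneg hb.le ha.le) (sub_nonneg.mpr ha1),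
      mul_nonneg hb.le (sub_nonneg.mpr ha1)]
  have hXge : -1 ≤ X := by
    rw [hXdef, le_div_iff₀ (by positivity)]
    linarith
  set S : ℝ := (a + a⁻¹) ^ 2 - (X + a) ^ 2 with hSdef
  have hSpos : 0 < S := by
    rw [hSdef]
    nlinarith [mul_pos ha (neg_pos.mpr hXneg),
      mul_nonneg (by linarith : (0:ℝ) ≤ 1 + X) (by linarith : (0:ℝ) ≤ 1 - X),
      sq_nonneg a⁻¹]
  have hY : 0 < Real.sqrt S := Real.sqrt_pos.mpr hSpos
  have hY2 : Real.sqrt S ^ 2 = S := Real.sq_sqrt hSpos.le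
  refine ⟨X, Real.sqrt S, hY, ?_⟩
  ext p
  rw [Set.mem_inter_iff, memS hra, memS hrb]
  constructor
  · rintro ⟨h1, h2⟩
    have hpx : p 0 * (2 * a ^ 2 * b ^ 2) = -(a + b) := solveX hab hA hB h1 h2
    have hp0 : p 0 = X := mul_right_cancel₀ (by positivity) (hpx.trans hX.symm)
    have hp1 : (p 1 - Real.sqrt S) * (p 1 + Real.sqrt S) = 0 := by
      have hq : (p 1) ^ 2 = Real.sqrt S ^ 2 := by
        rw [hY2, hSdef, ← hp0]; linarith
      linear_combination hq
    rcases mul_eq_zero.mp hp1 with h | h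
    · left
      refine PiLp.ext fun idx => ?_
      fin_cases idx
      · simpa [pt] using hp0
      · show p 1 = pt X (Real.sqrt S) 1
        simp only [pt, PiLp.toLp_apply, Matrix.cons_val_one, Matrix.head_cons, Matrix.cons_val_zero]
        linarith
    · right
      refine PiLp.ext fun idx => ?_
      fin_cases idx
      · simpa [pt] using hp0
      · show p 1 = pt X (-Real.sqrt S) 1
        simp only [pt, PiLp.toLp_apply, Matrix.cons_val_one, Matrix.head_cons, Matrix.cons_val_zero]
        linarith
  · have hc1 : (X + a) ^ 2 + Real.sqrt S ^ 2 = (a + a⁻¹) ^ 2 := by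
      rw [hY2, hSdef]; ring
    have hc2 : (X + b) ^ 2 + Real.sqrt S ^ 2 = (b + b⁻¹) ^ 2 := by
      have := otherCircle ha hb hA hB hX
      linarith
    rintro (rfl | rfl) <;>
      simp only [pt, Matrix.cons_val_zero, Matrix.cons_val_one, Matrix.head_cons, neg_sq] <;>
      exact ⟨hc1, hc2⟩

/-- For `m ≥ 3` and `k ∈ {1, …, m}`, let `C k` be the circle with center `(−4^k, 0)` and
radius `4^k + 4^{−k}`.  Then: (a) every two of the circles meet in exactly two points;
(b) no point lies on three of them; and (c) for `i < j < k`, both points of `C i ∩ C j` lie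
in the open disk of `C k`, both points of `C j ∩ C k` lie in the open disk of `C i`, and both
points of `C i ∩ C k` lie strictly outside the closed disk of `C j`.  In particular every
triple of these circles is NonKrupp. -/
theorem stmt7 (m : ℕ) (hm : 3 ≤ m) :
    let ctr : ℕ → E2 := fun k => pt (-(4 : ℝ) ^ k) 0
    let rad : ℕ → ℝ := fun k => (4 : ℝ) ^ k + (4 : ℝ) ^ (-(k : ℤ))
    let C : ℕ → Set E2 := fun k => Metric.sphere (ctr k) (rad k)
    (∀ i j : ℕ, 1 ≤ i → i ≤ m → 1 ≤ j → j ≤ m → i ≠ j →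
      ∃ p q : E2, p ≠ q ∧ C i ∩ C j = {p, q}) ∧
    (∀ i j k : ℕ, 1 ≤ i → i ≤ m → 1 ≤ j → j ≤ m → 1 ≤ k → k ≤ m →
      i ≠ j → i ≠ k → j ≠ k →
      ∀ x : E2, ¬ (x ∈ C i ∧ x ∈ C j ∧ x ∈ C k)) ∧
    (∀ i j k : ℕ, 1 ≤ i → i < j → j < k → k ≤ m →
      (∀ p ∈ C i ∩ C j, dist p (ctr k) < rad k) ∧
      (∀ p ∈ C j ∩ C k, dist p (ctr i) < rad i) ∧
      (∀ p ∈ C i ∩ C k, rad j < dist p (ctr j))) ∧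
    (∀ i j k : ℕ, 1 ≤ i → i ≤ m → 1 ≤ j → j ≤ m → 1 ≤ k → k ≤ m →
      i ≠ j → i ≠ k → j ≠ k →
      NonSepInt (ctr i) (rad i) (ctr j) (rad j) (ctr k) (rad k)) := by
  intro ctr rad C
  simp only [C, ctr, rad]
  have hz : ∀ k : ℕ, (4 : ℝ) ^ (-(k : ℤ)) = ((4 : ℝ) ^ k)⁻¹ := fun k => by
    rw [zpow_neg, zpow_natCast]
  simp only [hz]
  have h1p : ∀ n : ℕ, (1 : ℝ) ≤ 4 ^ n := fun n => one_le_pow₀ (by norm_num)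
  have h0p : ∀ n : ℕ, (0 : ℝ) < 4 ^ n := fun n => by positivity
  have hinv : ∀ n : ℕ, (4 : ℝ) ^ n * ((4 : ℝ) ^ n)⁻¹ = 1 := fun n =>
    mul_inv_cancel₀ (h0p n).ne'
  have hlt : ∀ {n k : ℕ}, n < k → (4 : ℝ) ^ n < (4 : ℝ) ^ k := fun {n k} h =>
    pow_lt_pow_right₀ (by norm_num) h
  have hne : ∀ {n k : ℕ}, n ≠ k → (4 : ℝ) ^ n ≠ (4 : ℝ) ^ k := fun {n k} h => by
    rcases h.lt_or_gt with h' | h'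
    · exact (hlt h').ne
    · exact (hlt h').ne'
  refine ⟨?_, ?_, ?_, ?_⟩
  · -- (a)
    intro i j _ _ _ _ hij
    obtain ⟨X, Y, hY, hset⟩ := inter_char (h1p i) (h1p j) (hne hij)
    refine ⟨pt X Y, pt X (-Y), ?_, hset⟩
    intro h
    have h1 : pt X Y 1 = pt X (-Y) 1 := by rw [h]
    simp [pt] at h1
    linarith
  · -- (b)
    intro i j k _ _ _ _ _ _ hij hik hjk x hx
    obtain ⟨hxi, hxj, hxk⟩ := hx
    have e1 := (memS (by positivity) ((4:ℝ)^i) x).mp hxi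
    have e2 := (memS (by positivity) ((4:ℝ)^j) x).mp hxj
    have e3 := (memS (by positivity) ((4:ℝ)^k) x).mp hxk
    have hxij := solveX (hne hij) (hinv i) (hinv j) e1 e2
    have hxik := solveX (hne hik) (hinv i) (hinv k) e1 e3
    have key : ((4:ℝ)^k - (4:ℝ)^j) *
        ((4:ℝ)^i * (4:ℝ)^j + (4:ℝ)^i * (4:ℝ)^k + (4:ℝ)^j * (4:ℝ)^k) = 0 := by
      linear_combination ((4:ℝ)^k)^2 * hxij - ((4:ℝ)^j)^2 * hxik
    rcases mul_eq_zero.mp key with h | h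
    · have : (4:ℝ)^j = (4:ℝ)^k := by linarith
      exact hne hjk this
    · nlinarith [mul_pos (h0p i) (h0p j), mul_pos (h0p i) (h0p k), mul_pos (h0p j) (h0p k)]
  · -- (c)
    intro i j k _ hij hjk _
    have hab : (4:ℝ)^i < (4:ℝ)^j := hlt hij
    have hbc : (4:ℝ)^j < (4:ℝ)^k := hlt hjk
    refine ⟨?_, ?_, ?_⟩
    · intro p hp
      obtain ⟨hp1, hp2⟩ := hp
      have e1 := (memS (by positivity) ((4:ℝ)^i) p).mp hp1
      have e2 := (memS (by positivity) ((4:ℝ)^j) p).mp hp2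
      have hx := solveX (hne hij.ne) (hinv i) (hinv j) e1 e2
      have key := insideBig (h0p i) hab hbc (hinv i) (hinv k) hx e1
      refine lt_of_sq_lt dist_nonneg (by positivity) ?_
      rw [dist_sq]
      nlinarith [key]
    · intro p hp
      obtain ⟨hp1, hp2⟩ := hp
      have e2 := (memS (by positivity) ((4:ℝ)^j) p).mp hp1
      have e3 := (memS (by positivity) ((4:ℝ)^k) p).mp hp2
      have hx := solveX (hne hjk.ne) (hinv j) (hinv k) e2 e3
      have key := insideSmall (h0p i) hab hbc (hinv i) (hinv j) hx e2
      refine lt_of_sq_lt dist_nonneg (by positivity) ?_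
      rw [dist_sq]
      nlinarith [key]
    · intro p hp
      obtain ⟨hp1, hp2⟩ := hp
      have e1 := (memS (by positivity) ((4:ℝ)^i) p).mp hp1
      have e3 := (memS (by positivity) ((4:ℝ)^k) p).mp hp2
      have hx := solveX (hne (hij.trans hjk).ne) (hinv i) (hinv k) e1 e3
      have key := outsideMid (h0p i) hab hbc (hinv i) (hinv j) hx e1
      refine lt_of_sq_lt (by positivity) dist_nonneg ?_
      rw [dist_sq]
      nlinarith [key]
  · -- (d)
    intro i j k _ _ _ _ _ _ _ _ hjk
    simp only [NonSepInt, Separates]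
    intro p q hpq hset
    obtain ⟨X, Y, hY, hJK⟩ := inter_char (h1p j) (h1p k) (hne hjk)
    have hpq' : ({p, q} : Set E2) = {pt X Y, pt X (-Y)} := hset.symm.trans hJK
    have hdsym : dist (pt X Y) (pt (-(4:ℝ)^i) 0) = dist (pt X (-Y)) (pt (-(4:ℝ)^i) 0) := by
      refine eq_of_sq_eq dist_nonneg dist_nonneg ?_
      rw [dist_sq, dist_sq]
      simp only [pt, Matrix.cons_val_zero, Matrix.cons_val_one, Matrix.head_cons]
      ring
    have hd : dist p (pt (-(4:ℝ)^i) 0) = dist q (pt (-(4:ℝ)^i) 0) := by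
      rcases Set.pair_eq_pair_iff.mp hpq' with ⟨h1, h2⟩ | ⟨h1, h2⟩ <;>
        rw [h1, h2]
      · exact hdsym
      · exact hdsym.symm
    simp only [Metric.mem_ball, hd, Xor']
    exact fun h => by rcases h with ⟨h1, h2⟩ | ⟨h1, h2⟩ <;> exact h2 h1
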